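/- arXiv:2409.11196 — 2 statements merged into one kernel-verified Lean document; each statement's English description precedes it below -/
import Mathlib

section
/- If Y and S are symmetric positive semidefinite n×n matrices with Y S = 0 and rank(Y) + rank(S) = n, then the matrix Y + S is nonsingular (invertible). -/
open Matrix

theorem strict_complementarity_sum_invertible {n : ℕ}
    (Y S : Matrix (Fin n) (Fin n) ℝ)
    (hY : Y.PosSemidef) (hS : S.PosSemidef)
    (h : Y * S = 0) (hrank : Y.rank + S.rank = n) :
    IsUnit (Y + S) := by
  -- range of S.mulVecLin is contained in ker of Y.mulVecLin
  have hle : LinearMap.range S.mulVecLin ≤ LinearMap.ker Y.mulVecLin := by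
    rintro x ⟨y, rfl⟩
    simp only [LinearMap.mem_ker, mulVecLin_apply, mulVec_mulVec, h, zero_mulVec]
  -- rank-nullity
  have hrn := LinearMap.finrank_range_add_finrank_ker Y.mulVecLin
  have hdim : Module.finrank ℝ (LinearMap.ker Y.mulVecLin) ≤
      Module.finrank ℝ (LinearMap.range S.mulVecLin) := by
    have h1 : Y.rank = Module.finrank ℝ (LinearMap.range Y.mulVecLin) := rfl
    have h2 : S.rank = Module.finrank ℝ (LinearMap.range S.mulVecLin) := rfl
    have hfin : Module.finrank ℝ (Fin n → ℝ) = n := by simp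
    omega
  have hkey : LinearMap.range S.mulVecLin = LinearMap.ker Y.mulVecLin :=
    Submodule.eq_of_le_of_finrank_le hle hdim
  -- injectivity of (Y + S).mulVec
  rw [← Matrix.mulVec_injective_iff_isUnit]
  have hker : ∀ x, (Y + S) *ᵥ x = 0 → x = 0 := by
    intro x hx
    have hYx : x ⬝ᵥ (Y *ᵥ x) + x ⬝ᵥ (S *ᵥ x) = 0 := by
      have := congrArg (fun v => x ⬝ᵥ v) hx
      simpa [add_mulVec, dotProduct_add] using this
    have hY0 : 0 ≤ x ⬝ᵥ (Y *ᵥ x) := by simpa using hY.dotProduct_mulVec_nonneg x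
    have hS0 : 0 ≤ x ⬝ᵥ (S *ᵥ x) := by simpa using hS.dotProduct_mulVec_nonneg x
    have hYz : Y *ᵥ x = 0 := by
      have : x ⬝ᵥ (Y *ᵥ x) = 0 := le_antisymm (by linarith) hY0
      have := (hY.dotProduct_mulVec_zero_iff x).mp (by simpa using this)
      exact this
    have hSz : S *ᵥ x = 0 := by
      have : x ⬝ᵥ (S *ᵥ x) = 0 := le_antisymm (by linarith) hS0
      have := (hS.dotProduct_mulVec_zero_iff x).mp (by simpa using this)
      exact this
    -- x ∈ ker Y = range S
    have hxr : x ∈ LinearMap.range S.mulVecLin := by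
      rw [hkey]; simpa [LinearMap.mem_ker] using hYz
    obtain ⟨y, rfl⟩ := hxr
    simp only [mulVecLin_apply] at hSz ⊢
    have hsym : Sᵀ = S := by
      have := hS.1
      simpa [conjTranspose, Matrix.map_id, Matrix.IsSymm] using this
    have : (S *ᵥ y) ⬝ᵥ (S *ᵥ y) = 0 := by
      calc (S *ᵥ y) ⬝ᵥ (S *ᵥ y) = ((S *ᵥ y) ᵥ* S) ⬝ᵥ y := by rw [dotProduct_mulVec]
        _ = (Sᵀ *ᵥ (S *ᵥ y)) ⬝ᵥ y := by rw [← mulVec_transpose]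
        _ = 0 := by rw [hsym, hSz]; simp
    exact dotProduct_self_eq_zero.mp this
  intro a b hab
  have : (Y + S) *ᵥ (a - b) = 0 := by
    rw [mulVec_sub, hab, sub_self]
  exact sub_eq_zero.mp (hker _ this)
end

section
/- The map X ↦ U Λ₊ Uᵀ, where X = U Λ Uᵀ is an eigendecomposition of a symmetric matrix X and Λ₊ replaces each eigenvalue by its positive part, is the metric projection of X onto the cone of positive semidefinite matrices with respect to the Frobenius norm: U Λ₊ Uᵀ is PSD and minimizes ‖X − Z‖_F over PSD matrices Z. -/
open Matrix

theorem psd_projection_is_metric_projection {n : ℕ}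
    (X U Λ : Matrix (Fin n) (Fin n) ℝ)
    (hXsymm : X.IsSymm) (hU : Uᵀ * U = 1) (hΛ : Λ.IsDiag)
    (hX : X = U * Λ * Uᵀ) :
    (U * Matrix.of (fun i j => if i = j then max (Λ i i) 0 else 0) * Uᵀ).PosSemidef ∧
    ∀ Z : Matrix (Fin n) (Fin n) ℝ, Z.IsSymm → Z.PosSemidef →
      Real.sqrt (((X - U * Matrix.of (fun i j => if i = j then max (Λ i i) 0 else 0) * Uᵀ)ᵀ *
        (X - U * Matrix.of (fun i j => if i = j then max (Λ i i) 0 else 0) * Uᵀ)).trace)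
      ≤ Real.sqrt (((X - Z)ᵀ * (X - Z)).trace) := by
  set D : Matrix (Fin n) (Fin n) ℝ :=
    Matrix.of (fun i j => if i = j then max (Λ i i) 0 else 0) with hD
  have hDdiag : D = Matrix.diagonal (fun i => max (Λ i i) 0) := rfl
  have hDpsd : D.PosSemidef := by
    rw [hDdiag]
    exact Matrix.posSemidef_diagonal_iff.mpr fun i => le_max_right _ _
  have hUUT : U * Uᵀ = 1 := mul_eq_one_comm.mp hU
  constructor
  · have := hDpsd.mul_mul_conjTranspose_same U
    simpa using this
  · intro Z hZsymm hZpsd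
    set Y : Matrix (Fin n) (Fin n) ℝ := Uᵀ * Z * U with hYdef
    have hYpsd : Y.PosSemidef := by
      have := hZpsd.mul_mul_conjTranspose_same Uᵀ
      simpa [hYdef] using this
    have hYdiag : ∀ i, 0 ≤ Y i i := by
      intro i
      have := hYpsd.diag_nonneg (i := i)
      simpa [dotProduct, mulVec, Pi.single_apply, Finset.sum_ite_eq,
        Finset.sum_ite_eq'] using this
    -- Frobenius invariance under U · Uᵀ conjugation
    have key : ∀ A : Matrix (Fin n) (Fin n) ℝ,
        ((U * A * Uᵀ)ᵀ * (U * A * Uᵀ)).trace = (Aᵀ * A).trace := by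
      intro A
      have h1 : (U * A * Uᵀ)ᵀ = U * Aᵀ * Uᵀ := by
        simp [Matrix.transpose_mul, Matrix.mul_assoc]
      rw [h1]
      have h2 : U * Aᵀ * Uᵀ * (U * A * Uᵀ) = U * (Aᵀ * A * Uᵀ) := by
        calc U * Aᵀ * Uᵀ * (U * A * Uᵀ) = U * Aᵀ * (Uᵀ * U) * (A * Uᵀ) := by
              simp only [Matrix.mul_assoc]
          _ = U * (Aᵀ * A * Uᵀ) := by rw [hU]; simp only [Matrix.mul_one, Matrix.mul_assoc]
      rw [h2, Matrix.trace_mul_comm, Matrix.mul_assoc, hU, Matrix.mul_one]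
    have hXD : X - U * D * Uᵀ = U * (Λ - D) * Uᵀ := by
      rw [hX]; noncomm_ring
    have hXZ : X - Z = U * (Λ - Y) * Uᵀ := by
      have hZ : U * Y * Uᵀ = Z := by
        calc U * (Uᵀ * Z * U) * Uᵀ = (U * Uᵀ) * Z * (U * Uᵀ) := by
              simp only [Matrix.mul_assoc]
          _ = Z := by rw [hUUT]; simp
      rw [hX, ← hZ]; noncomm_ring
    rw [hXD, hXZ, key, key]
    apply Real.sqrt_le_sqrt
    -- both traces as sums of squares of entries
    have trsum : ∀ A : Matrix (Fin n) (Fin n) ℝ,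
        (Aᵀ * A).trace = ∑ j, ∑ i, (A i j)^2 := by
      intro A
      simp [Matrix.trace, Matrix.mul_apply, Matrix.diag, sq]
    rw [trsum, trsum]
    have hLD : ∑ j, ∑ i, ((Λ - D) i j)^2 = ∑ j, (min (Λ j j) 0)^2 := by
      apply Finset.sum_congr rfl
      intro j _
      rw [Finset.sum_eq_single j]
      · have : (Λ - D) j j = min (Λ j j) 0 := by
          simp [hD, Matrix.sub_apply]
          rcases le_total (Λ j j) 0 with h | h
          · rw [min_eq_left h, max_eq_right h]; ring
          · rw [min_eq_right h, max_eq_left h]; ring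
        rw [this]
      · intro i _ hij
        have : (Λ - D) i j = 0 := by
          simp [hD, Matrix.sub_apply, hij, hΛ hij]
        rw [this]; ring
      · intro h; exact absurd (Finset.mem_univ j) h
    rw [hLD]
    calc ∑ j, (min (Λ j j) 0)^2 ≤ ∑ j, ((Λ - Y) j j)^2 := by
          apply Finset.sum_le_sum
          intro j _
          have hy := hYdiag j
          have hljj : (Λ - Y) j j = Λ j j - Y j j := by simp [Matrix.sub_apply]
          rw [hljj]
          rcases le_total (Λ j j) 0 with h | h
          · rw [min_eq_left h]; nlinarith
          · rw [min_eq_right h]; nlinarith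
      _ ≤ ∑ j, ∑ i, ((Λ - Y) i j)^2 := by
          apply Finset.sum_le_sum
          intro j _
          exact Finset.single_le_sum (f := fun i => ((Λ - Y) i j)^2) (fun i _ => sq_nonneg _) (Finset.mem_univ j)
end
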